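/- Let I = (𝒳, 𝒞) be an instance of 23SAT containing clauses c₁, c₂ and literals l₁, l₂ with {l₁, l₂} ⊆ c₁ and {¬l₁, ¬l₂} ⊆ c₂, where l₁ is a minor literal and ¬l₂ is a minor literal. Then I is satisfiable if and only if the instance obtained from I by deleting all clauses containing ¬l₁ or l₂ is satisfiable. -/
import Mathlib


/-- A literal: a variable together with a polarity. -/
structure Lit (α : Type*) where
  var : α
  pos : Bool
deriving DecidableEq

/-- The negation of a literal. -/
def Lit.neg {α : Type*} (l : Lit α) : Lit α := ⟨l.var, !l.pos⟩

/-- Evaluation of a literal under a truth assignment. -/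
def Lit.eval {α : Type*} (t : α → Bool) (l : Lit α) : Bool :=
  if l.pos then t l.var else !(t l.var)

/-- A truth assignment satisfies a clause if it contains a true literal. -/
def SatisfiesClause {α : Type*} (t : α → Bool) (c : Finset (Lit α)) : Prop :=
  ∃ l ∈ c, Lit.eval t l = true

/-- A set of clauses is satisfiable. -/
def SatInstance {α : Type*} (𝒞 : Finset (Finset (Lit α))) : Prop :=
  ∃ t : α → Bool, ∀ c ∈ 𝒞, SatisfiesClause t c

/-- A literal is major if it occurs in at least two clauses of `𝒞`. -/
def MajorLit {α : Type*} [DecidableEq α] (𝒞 : Finset (Finset (Lit α))) (l : Lit α) : Prop :=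
  2 ≤ (𝒞.filter (fun c => l ∈ c)).card

/-- A literal is minor if it occurs in exactly one clause of `𝒞`. -/
def MinorLit {α : Type*} [DecidableEq α] (𝒞 : Finset (Finset (Lit α))) (l : Lit α) : Prop :=
  (𝒞.filter (fun c => l ∈ c)).card = 1

lemma minor_unique {α : Type*} [DecidableEq α] {𝒞 : Finset (Finset (Lit α))} {l : Lit α}
    (h : MinorLit 𝒞 l) {c c' : Finset (Lit α)} (hc : c ∈ 𝒞) (hlc : l ∈ c)
    (hc' : c' ∈ 𝒞) (hlc' : l ∈ c') : c = c' := by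
  obtain ⟨a, ha⟩ := Finset.card_eq_one.mp h
  have h1 : c ∈ 𝒞.filter (fun c => l ∈ c) := Finset.mem_filter.mpr ⟨hc, hlc⟩
  have h2 : c' ∈ 𝒞.filter (fun c => l ∈ c) := Finset.mem_filter.mpr ⟨hc', hlc'⟩
  rw [ha, Finset.mem_singleton] at h1 h2
  rw [h1, h2]

lemma var_eq_cases {α : Type*} {l m : Lit α} (h : l.var = m.var) : l = m ∨ l = m.neg := by
  cases l with
  | mk v b =>
    cases m with
    | mk w c =>
      simp only [Lit.neg] at *
      subst h
      cases b <;> cases c <;> simp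

theorem delete_clauses_minor_case {α : Type*} [DecidableEq α]
    (𝒞 : Finset (Finset (Lit α)))
    (hsize : ∀ c ∈ 𝒞, c.card = 2 ∨ c.card = 3)
    (hcons : ∀ c ∈ 𝒞, ∀ l ∈ c, l.neg ∉ c)
    (hmaj : ∀ c ∈ 𝒞, ∀ l₁ ∈ c, ∀ l₂ ∈ c, MajorLit 𝒞 l₁ → MajorLit 𝒞 l₂ → l₁ = l₂)
    (c₁ c₂ : Finset (Lit α)) (hc₁ : c₁ ∈ 𝒞) (hc₂ : c₂ ∈ 𝒞) (hcc : c₁ ≠ c₂)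
    (l₁ l₂ : Lit α) (hll : l₁ ≠ l₂)
    (h₁ : l₁ ∈ c₁) (h₂ : l₂ ∈ c₁) (h₃ : l₁.neg ∈ c₂) (h₄ : l₂.neg ∈ c₂)
    (hm₁ : MinorLit 𝒞 l₁) (hm₂ : MinorLit 𝒞 l₂.neg) :
    SatInstance 𝒞 ↔
      SatInstance (𝒞.filter (fun c => l₁.neg ∉ c ∧ l₂ ∉ c)) := by
  constructor
  · rintro ⟨t, ht⟩
    exact ⟨t, fun c hc => ht c (Finset.mem_filter.mp hc).1⟩
  · rintro ⟨t, ht⟩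
    -- variables of l₁ and l₂ are distinct
    have hvar : l₁.var ≠ l₂.var := by
      intro h
      rcases var_eq_cases h.symm with h' | h'
      · exact hll h'.symm
      · subst h'
        exact hcons c₁ hc₁ l₁ h₁ h₂
    refine ⟨fun x => if x = l₁.var then !l₁.pos else if x = l₂.var then l₂.pos else t x, ?_⟩
    intro c hc
    set t' : α → Bool := fun x =>
      if x = l₁.var then !l₁.pos else if x = l₂.var then l₂.pos else t x with ht'
    by_cases hA : l₁.neg ∈ c
    · refine ⟨l₁.neg, hA, ?_⟩
      simp only [Lit.eval, Lit.neg, ht', if_pos rfl]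
      cases l₁.pos <;> simp
    by_cases hB : l₂ ∈ c
    · refine ⟨l₂, hB, ?_⟩
      simp only [Lit.eval, ht', if_neg (Ne.symm hvar), if_pos rfl]
      cases l₂.pos <;> simp
    -- c is a kept clause
    obtain ⟨l, hlc, hle⟩ := ht c (Finset.mem_filter.mpr ⟨hc, hA, hB⟩)
    refine ⟨l, hlc, ?_⟩
    have hv1 : l.var ≠ l₁.var := by
      intro h
      rcases var_eq_cases h with h' | h'
      · subst h'
        have : c = c₁ := minor_unique hm₁ hc hlc hc₁ h₁
        subst this
        exact hB h₂
      · exact hA (h' ▸ hlc)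
    have hv2 : l.var ≠ l₂.var := by
      intro h
      rcases var_eq_cases h with h' | h'
      · exact hB (h' ▸ hlc)
      · subst h'
        have : c = c₂ := minor_unique hm₂ hc hlc hc₂ h₄
        subst this
        exact hA h₃
    simp only [Lit.eval, ht', if_neg hv1, if_neg hv2] at *
    exact hle
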